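/- Let ψ = φ^⟨-1⟩ be the compositional inverse of φ, let χ = ψ/(h∘ψ) (the power series ψ multiplied by the multiplicative inverse of h∘ψ), and let B be an upper triangular matrix satisfying A·B = B·A = I. Then for every nonnegative integer s and all 1 ≤ k ≤ n, [B^s]_{k,n} = (a_k/a_n)·(1/k!)·(d/dt)^n_{t=0}[ (χ^⟨s⟩(t))^k · ( ∏_{i=0}^{s-1} g(ψ(χ^⟨i⟩(t))) )^{-1} ], where the empty product (s = 0) equals 1 and the outer inverse is the multiplicative inverse of a power series with nonzero constant term. -/

import Mathlib

open PowerSeries Finset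

noncomputable section

/-- Product of two infinite matrices of complex numbers (indexed by positive integers,
upper triangular): `[A·B]_{k,n} = ∑_{j=k}^{n} [A]_{k,j}·[B]_{j,n}`. -/
def triMul (A B : ℕ → ℕ → ℂ) : ℕ → ℕ → ℂ :=
  fun k n => ∑ j ∈ Finset.Icc k n, A k j * B j n

/-- The identity matrix. -/
def triId : ℕ → ℕ → ℂ := fun k n => if k = n then 1 else 0

/-- Powers of a matrix: `A^0 = I`, `A^{s+1} = A^s · A`. -/
def triPow (A : ℕ → ℕ → ℂ) : ℕ → ℕ → ℕ → ℂ
  | 0 => triId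
  | s + 1 => triMul (triPow A s) A

/-- Composition `F ∘ G` of formal power series (intended for `G` with zero
constant coefficient): the coefficient of `t^n` is `∑_{j=0}^{n} F_j · [t^n](G^j)`. -/
def psComp (F G : PowerSeries ℂ) : PowerSeries ℂ :=
  PowerSeries.mk fun n =>
    ∑ j ∈ Finset.range (n + 1), (PowerSeries.coeff j F) * (PowerSeries.coeff n (G ^ j))

/-- Iterated composition: `φ^⟨0⟩ = t`, `φ^⟨s+1⟩ = φ^⟨s⟩ ∘ φ`. -/
def iterComp (φ : PowerSeries ℂ) : ℕ → PowerSeries ℂ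
  | 0 => PowerSeries.X
  | s + 1 => psComp (iterComp φ s) φ


lemma coeff_psComp (F G : PowerSeries ℂ) (n : ℕ) :
    coeff n (psComp F G) =
      ∑ j ∈ Finset.range (n + 1), (coeff j F) * (coeff n (G ^ j)) := by
  simp [psComp]

-- order lemma
lemma coeff_pow_mul_eq_zero {G V : PowerSeries ℂ} (hG : constantCoeff G = 0)
    {j m : ℕ} (h : m < j) : coeff m (G ^ j * V) = 0 := by
  obtain ⟨q, rfl⟩ := PowerSeries.X_dvd_iff.2 hG
  rw [mul_pow, mul_assoc, PowerSeries.coeff_mul]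
  apply Finset.sum_eq_zero
  rintro ⟨p, r⟩ hp
  rw [Finset.HasAntidiagonal.mem_antidiagonal] at hp
  rw [PowerSeries.coeff_X_pow]
  have : p ≠ j := by omega
  simp [this]

lemma coeff_pow_eq_zero {G : PowerSeries ℂ} (hG : constantCoeff G = 0)
    {j m : ℕ} (h : m < j) : coeff m (G ^ j) = 0 := by
  simpa using coeff_pow_mul_eq_zero (V := 1) hG h

lemma constantCoeff_psComp (F G : PowerSeries ℂ) :
    constantCoeff (psComp F G) = constantCoeff F := by
  have := coeff_psComp F G 0
  simp only [PowerSeries.coeff_zero_eq_constantCoeff] at this ⊢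
  simpa using this

lemma coeff_psComp_ext {G : PowerSeries ℂ} (hG : constantCoeff G = 0) (F : PowerSeries ℂ)
    {n N : ℕ} (hn : n ≤ N) :
    coeff n (psComp F G) =
      ∑ j ∈ Finset.range (N + 1), (coeff j F) * (coeff n (G ^ j)) := by
  rw [coeff_psComp]
  apply Finset.sum_subset
  · exact Finset.range_subset_range.2 (by omega)
  · intro j hj hj'
    simp only [Finset.mem_range] at hj hj'
    rw [coeff_pow_eq_zero hG (by omega), mul_zero]

lemma coeff_aeval {G : PowerSeries ℂ} (hG : constantCoeff G = 0) (P : Polynomial ℂ) (n : ℕ) :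
    coeff n (Polynomial.aeval G P) =
      ∑ j ∈ Finset.range (n + 1), P.coeff j * coeff n (G ^ j) := by
  have hrep : Polynomial.aeval G P = ∑ j ∈ P.support, PowerSeries.C (P.coeff j) * G ^ j := by
    rw [Polynomial.aeval_def, Polynomial.eval₂_eq_sum, Polynomial.sum]; rfl
  rw [hrep, map_sum]
  simp only [PowerSeries.coeff_C_mul]
  calc ∑ j ∈ P.support, P.coeff j * coeff n (G ^ j)
      = ∑ j ∈ P.support ∪ Finset.range (n + 1), P.coeff j * coeff n (G ^ j) := by
        apply Finset.sum_subset Finset.subset_union_left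
        intro j hj hj'
        rw [Polynomial.notMem_support_iff.1 hj', zero_mul]
    _ = ∑ j ∈ Finset.range (n + 1), P.coeff j * coeff n (G ^ j) := by
        refine (Finset.sum_subset Finset.subset_union_right ?_).symm
        intro j hj hj'
        simp only [Finset.mem_range, not_lt] at hj'
        rw [coeff_pow_eq_zero hG (by omega), mul_zero]

lemma coeff_psComp_aeval {G : PowerSeries ℂ} (hG : constantCoeff G = 0) (F : PowerSeries ℂ)
    {n N : ℕ} (hn : n ≤ N) :
    coeff n (psComp F G) = coeff n (Polynomial.aeval G (trunc (N + 1) F)) := by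
  rw [coeff_aeval hG, coeff_psComp_ext hG F hn]
  rw [← Finset.sum_subset (Finset.range_subset_range.2 (show n + 1 ≤ N + 1 by omega))]
  · apply Finset.sum_congr rfl
    intro j hj
    simp only [Finset.mem_range] at hj
    rw [coeff_trunc, if_pos (by omega)]
  · intro j hj hj'
    simp only [Finset.mem_range] at hj hj'
    rw [coeff_pow_eq_zero hG (by omega), mul_zero]

-- agreement machinery
lemma agree_mul {E₁ E₂ E₁' E₂' : PowerSeries ℂ} {n : ℕ}
    (h1 : ∀ m ≤ n, coeff m E₁ = coeff m E₁') (h2 : ∀ m ≤ n, coeff m E₂ = coeff m E₂') :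
    ∀ m ≤ n, coeff m (E₁ * E₂) = coeff m (E₁' * E₂') := by
  intro m hm
  rw [PowerSeries.coeff_mul, PowerSeries.coeff_mul]
  apply Finset.sum_congr rfl
  rintro ⟨p, q⟩ hp
  rw [Finset.HasAntidiagonal.mem_antidiagonal] at hp
  rw [h1 p (by omega), h2 q (by omega)]

lemma agree_pow {E E' : PowerSeries ℂ} {n : ℕ}
    (h1 : ∀ m ≤ n, coeff m E = coeff m E') (i : ℕ) :
    ∀ m ≤ n, coeff m (E ^ i) = coeff m (E' ^ i) := by
  induction i with
  | zero => intro m hm; rw [pow_zero, pow_zero]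
  | succ i ih =>
    rw [pow_succ, pow_succ]
    exact agree_mul ih h1

lemma psComp_X_right (F : PowerSeries ℂ) : psComp F PowerSeries.X = F := by
  ext n
  rw [coeff_psComp]
  rw [Finset.sum_eq_single n]
  · rw [PowerSeries.coeff_X_pow, if_pos rfl, mul_one]
  · intro j hj hjn
    rw [PowerSeries.coeff_X_pow, if_neg (Ne.symm hjn), mul_zero]
  · intro h
    exact absurd (Finset.self_mem_range_succ n) h

lemma psComp_X_left {G : PowerSeries ℂ} (hG : constantCoeff G = 0) :
    psComp PowerSeries.X G = G := by
  ext n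
  rw [coeff_psComp]
  rcases Nat.eq_zero_or_pos n with rfl | hn
  · simp [PowerSeries.coeff_zero_eq_constantCoeff, hG]
  · rw [Finset.sum_eq_single 1]
    · simp [PowerSeries.coeff_X]
    · intro j hj hj1
      rw [PowerSeries.coeff_X, if_neg hj1, zero_mul]
    · intro h
      exact absurd (Finset.mem_range.2 (by omega)) h

lemma psComp_one (G : PowerSeries ℂ) : psComp 1 G = 1 := by
  ext n
  rw [coeff_psComp, Finset.sum_eq_single 0]
  · simp
  · intro j hj hj0
    rw [PowerSeries.coeff_one, if_neg hj0, zero_mul]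
  · intro h
    exact absurd (Finset.mem_range.2 (by omega)) h

lemma psComp_mul {G : PowerSeries ℂ} (hG : constantCoeff G = 0) (F₁ F₂ : PowerSeries ℂ) :
    psComp (F₁ * F₂) G = psComp F₁ G * psComp F₂ G := by
  ext n
  rw [coeff_psComp_aeval hG _ (le_refl n), PowerSeries.coeff_mul]
  have hR : ∀ p : ℕ, p ≤ n → ∀ F : PowerSeries ℂ,
      coeff p (psComp F G) = coeff p (Polynomial.aeval G (trunc (n + 1) F)) :=
    fun p hp F => coeff_psComp_aeval hG F hp
  have : ∑ p ∈ Finset.HasAntidiagonal.antidiagonal n, coeff p.1 (psComp F₁ G) * coeff p.2 (psComp F₂ G)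
      = ∑ p ∈ Finset.HasAntidiagonal.antidiagonal n, coeff p.1 (Polynomial.aeval G (trunc (n + 1) F₁)) *
          coeff p.2 (Polynomial.aeval G (trunc (n + 1) F₂)) := by
    apply Finset.sum_congr rfl
    rintro ⟨p, q⟩ hp
    rw [Finset.HasAntidiagonal.mem_antidiagonal] at hp
    rw [hR p (by omega) F₁, hR q (by omega) F₂]
  rw [this, ← PowerSeries.coeff_mul, ← map_mul]
  rw [coeff_aeval hG, coeff_aeval hG]
  apply Finset.sum_congr rfl
  intro j hj
  simp only [Finset.mem_range] at hj
  congr 1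
  rw [Polynomial.coeff_mul, coeff_trunc, if_pos (by omega), PowerSeries.coeff_mul]
  apply Finset.sum_congr rfl
  rintro ⟨p, q⟩ hp
  rw [Finset.HasAntidiagonal.mem_antidiagonal] at hp
  rw [coeff_trunc, if_pos (by omega), coeff_trunc, if_pos (by omega)]

lemma psComp_pow {G : PowerSeries ℂ} (hG : constantCoeff G = 0) (F : PowerSeries ℂ) (k : ℕ) :
    psComp (F ^ k) G = (psComp F G) ^ k := by
  induction k with
  | zero => simpa using psComp_one G
  | succ k ih => rw [pow_succ, pow_succ, psComp_mul hG, ih]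

lemma psComp_inv {G : PowerSeries ℂ} (hG : constantCoeff G = 0) {F : PowerSeries ℂ}
    (hF : constantCoeff F ≠ 0) : psComp F⁻¹ G = (psComp F G)⁻¹ := by
  have h1 : psComp F G * psComp F⁻¹ G = 1 := by
    rw [← psComp_mul hG, PowerSeries.mul_inv_cancel F hF, psComp_one]
  have h2 : constantCoeff (psComp F G) ≠ 0 := by
    rw [constantCoeff_psComp]; exact hF
  exact ((PowerSeries.eq_inv_iff_mul_eq_one h2).2 (by rw [mul_comm] at h1; exact h1)).symm
    |>.symm ▸ rfl

lemma psComp_prod {G : PowerSeries ℂ} (hG : constantCoeff G = 0) {ι : Type*}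
    (t : Finset ι) (f : ι → PowerSeries ℂ) :
    psComp (∏ i ∈ t, f i) G = ∏ i ∈ t, psComp (f i) G := by
  induction t using Finset.cons_induction with
  | empty => simpa using psComp_one G
  | cons i t hi ih => rw [Finset.prod_cons, Finset.prod_cons, psComp_mul hG, ih]

lemma trunc_coe_agree (G : PowerSeries ℂ) (n : ℕ) :
    ∀ m ≤ n, coeff m ((trunc (n + 1) G : Polynomial ℂ) : PowerSeries ℂ) = coeff m G := by
  intro m hm
  rw [Polynomial.coeff_coe, coeff_trunc, if_pos (by omega)]

lemma psComp_assoc {G H : PowerSeries ℂ} (hG : constantCoeff G = 0)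
    (hH : constantCoeff H = 0) (F : PowerSeries ℂ) :
    psComp (psComp F G) H = psComp F (psComp G H) := by
  ext n
  have hKag : ∀ m ≤ n, coeff m (psComp G H) =
      coeff m (Polynomial.aeval H (trunc (n + 1) G)) :=
    fun m hm => coeff_psComp_aeval hH G hm
  rw [coeff_psComp, coeff_psComp]
  have hrhs : ∀ i ∈ Finset.range (n + 1),
      coeff i (F) * coeff n ((psComp G H) ^ i)
      = coeff i F * ∑ j ∈ Finset.range (n + 1),
          ((trunc (n + 1) G) ^ i).coeff j * coeff n (H ^ j) := by
    intro i _
    congr 1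
    rw [agree_pow hKag i n (le_refl n), ← map_pow, coeff_aeval hH]
  rw [Finset.sum_congr rfl hrhs]
  have hlhs : ∀ j ∈ Finset.range (n + 1),
      coeff j (psComp F G) * coeff n (H ^ j)
      = (∑ i ∈ Finset.range (n + 1), coeff i F *
          ((trunc (n + 1) G) ^ i).coeff j) * coeff n (H ^ j) := by
    intro j hj
    simp only [Finset.mem_range] at hj
    rw [coeff_psComp_ext hG F (show j ≤ n by omega)]
    congr 1
    apply Finset.sum_congr rfl
    intro i _
    congr 1
    have : ((trunc (n + 1) G) ^ i).coeff j
        = coeff j ((((trunc (n + 1) G) : Polynomial ℂ) : PowerSeries ℂ) ^ i) := by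
      rw [← Polynomial.coe_pow, Polynomial.coeff_coe]
    rw [this, agree_pow (trunc_coe_agree G n) i j (by omega)]
  rw [Finset.sum_congr rfl hlhs]
  simp only [Finset.sum_mul, Finset.mul_sum]
  rw [Finset.sum_comm]
  apply Finset.sum_congr rfl
  intro i _
  apply Finset.sum_congr rfl
  intro j _
  ring

lemma coeff_derivativeFun' (f : PowerSeries ℂ) (n : ℕ) :
    coeff n (derivativeFun f) = coeff (n + 1) f * (n + 1) :=
  coeff_derivative f n

lemma derivativeFun_pow (f : PowerSeries ℂ) (m : ℕ) :
    derivativeFun (f ^ (m + 1)) = (PowerSeries.C (R := ℂ) (m + 1)) * f ^ m * derivativeFun f := by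
  induction m with
  | zero => simp
  | succ m ih =>
    rw [pow_succ, derivativeFun_mul, ih, smul_eq_mul, smul_eq_mul]
    push_cast
    simp only [map_add, map_one, map_ofNat]
    ring

lemma inv_pow_mul_pow {h : PowerSeries ℂ} (hh : constantCoeff h ≠ 0) {j m : ℕ} (hjm : j ≤ m) :
    (h⁻¹) ^ j * h ^ m = h ^ (m - j) := by
  have h1 : h ^ m = h ^ (m - j) * h ^ j := by rw [← pow_add]; congr 1; omega
  calc (h⁻¹) ^ j * h ^ m = ((h⁻¹) ^ j * h ^ j) * h ^ (m - j) := by rw [h1]; ring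
    _ = h ^ (m - j) := by rw [← mul_pow, PowerSeries.inv_mul_cancel h hh, one_pow, one_mul]

lemma coeff_pow_mul_derivative_pow (h : PowerSeries ℂ) (hh : constantCoeff h ≠ 0)
    {r : ℕ} (hr : 1 ≤ r) :
    coeff (r - 1) (h ^ (r - 1) * derivativeFun h) = coeff r (h ^ r) := by
  have h1 : derivativeFun (h ^ r) = (PowerSeries.C (R := ℂ) r) * h ^ (r - 1) * derivativeFun h := by
    have := derivativeFun_pow h (r - 1)
    rw [show r - 1 + 1 = r by omega] at this
    rw [this]
    congr 2
    push_cast [show ((r - 1 : ℕ) : ℂ) = (r : ℂ) - 1 by push_cast [Nat.cast_sub hr]; ring]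
    ring
  have h2 : coeff (r - 1) (derivativeFun (h ^ r)) = coeff r (h ^ r) * r := by
    rw [coeff_derivativeFun', show r - 1 + 1 = r by omega]
    norm_num
    left; congr 1; push_cast [Nat.cast_sub hr]; ring
  have h3 : coeff (r - 1) (derivativeFun (h ^ r)) =
      (r : ℂ) * coeff (r - 1) (h ^ (r - 1) * derivativeFun h) := by
    rw [h1, mul_assoc, PowerSeries.coeff_C_mul]
  have hr0 : (r : ℂ) ≠ 0 := Nat.cast_ne_zero.2 (by omega)
  apply mul_left_cancel₀ hr0
  rw [← h3, h2]; ring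

lemma coeff_X_pow_mul' {p : PowerSeries ℂ} {j m : ℕ} (hjm : j ≤ m) :
    coeff m (PowerSeries.X ^ j * p) = coeff (m - j) p := by
  conv_lhs => rw [show m = (m - j) + j by omega]
  exact PowerSeries.coeff_X_pow_mul p j (m - j)

lemma star_j (h : PowerSeries ℂ) (hh : constantCoeff h ≠ 0) {n j : ℕ} (hn : 1 ≤ n)
    (hj : j ≤ n) :
    coeff (n - 1) (h ^ n * derivativeFun ((PowerSeries.X * h⁻¹) ^ j)) =
      if j = n then (n : ℂ) else 0 := by
  rcases Nat.eq_zero_or_pos j with rfl | hj1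
  · rw [pow_zero, derivativeFun_one, mul_zero, map_zero, if_neg (by omega)]
  set u := PowerSeries.X * h⁻¹ with hu
  have hmain : h ^ n * derivativeFun (u ^ j) =
      derivativeFun (u ^ j * h ^ n) - u ^ j * derivativeFun (h ^ n) := by
    rw [derivativeFun_mul, smul_eq_mul, smul_eq_mul]; ring
  have huj : u ^ j * h ^ n = PowerSeries.X ^ j * h ^ (n - j) := by
    rw [hu, mul_pow, mul_assoc, inv_pow_mul_pow hh hj]
  have hDh : derivativeFun (h ^ n) = (PowerSeries.C (R := ℂ) n) * h ^ (n - 1) * derivativeFun h := by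
    have := derivativeFun_pow h (n - 1)
    rw [show n - 1 + 1 = n by omega] at this
    rw [this]
    congr 2
    rw [Nat.cast_sub hn]; push_cast; ring
  rw [hmain, map_sub, huj]
  have hterm1 : coeff (n - 1) (derivativeFun (PowerSeries.X ^ j * h ^ (n - j))) =
      coeff (n - j) (h ^ (n - j)) * n := by
    rw [coeff_derivativeFun', show n - 1 + 1 = n by omega, coeff_X_pow_mul' hj]
    congr 1
    rw [Nat.cast_sub hn]; push_cast; ring
  rw [hterm1, hDh]
  rcases eq_or_lt_of_le hj with rfl | hjn
  · have h2 : u ^ j * ((PowerSeries.C (R := ℂ) j) * h ^ (j - 1) * derivativeFun h) =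
        PowerSeries.X ^ j * ((h⁻¹) ^ j * ((PowerSeries.C (R := ℂ) j) * h ^ (j - 1) * derivativeFun h)) := by
      rw [hu, mul_pow]; ring
    rw [h2, coeff_pow_mul_eq_zero (by simp) (by omega : j - 1 < j)]
    simp only [Nat.sub_self, pow_zero, if_pos rfl, sub_zero]
    rw [PowerSeries.coeff_zero_eq_constantCoeff, map_one, one_mul, if_pos trivial]
  · have h2 : u ^ j * ((PowerSeries.C (R := ℂ) n) * h ^ (n - 1) * derivativeFun h) =
        (PowerSeries.C (R := ℂ) n) * (PowerSeries.X ^ j * (h ^ (n - 1 - j) * derivativeFun h)) := by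
      rw [hu, mul_pow]
      have h3 : (h⁻¹) ^ j * h ^ (n - 1) = h ^ (n - 1 - j) := inv_pow_mul_pow hh (by omega)
      calc PowerSeries.X ^ j * (h⁻¹) ^ j * ((PowerSeries.C (R := ℂ) n) * h ^ (n - 1) * derivativeFun h)
          = (PowerSeries.C (R := ℂ) n) * (PowerSeries.X ^ j * (((h⁻¹) ^ j * h ^ (n - 1)) * derivativeFun h)) := by
            ring
        _ = _ := by rw [h3]
    rw [h2, PowerSeries.coeff_C_mul, coeff_X_pow_mul' (show j ≤ n - 1 by omega)]
    have hdrop : coeff (n - 1 - j) (h ^ (n - 1 - j) * derivativeFun h) =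
        coeff (n - j) (h ^ (n - j)) := by
      have := coeff_pow_mul_derivative_pow h hh (r := n - j) (by omega)
      rw [show n - j - 1 = n - 1 - j by omega] at this
      exact this
    rw [hdrop, if_neg (by omega)]
    ring

lemma agree_derivative {P₁ P₂ : PowerSeries ℂ} {n : ℕ}
    (h : ∀ m ≤ n, coeff m P₁ = coeff m P₂) :
    ∀ m, m < n → coeff m (derivativeFun P₁) = coeff m (derivativeFun P₂) := by
  intro m hm
  rw [coeff_derivativeFun', coeff_derivativeFun', h (m + 1) (by omega)]

lemma agree_mul_derivative {P₁ P₂ V : PowerSeries ℂ} {n : ℕ} (hn : 1 ≤ n)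
    (h : ∀ m ≤ n, coeff m P₁ = coeff m P₂) :
    coeff (n - 1) (V * derivativeFun P₁) = coeff (n - 1) (V * derivativeFun P₂) := by
  refine agree_mul (n := n - 1) (fun m _ => rfl) ?_ (n - 1) (le_refl _)
  intro m hm
  exact agree_derivative h m (by omega)

lemma star (h : PowerSeries ℂ) (hh : constantCoeff h ≠ 0) (W : PowerSeries ℂ) {n : ℕ}
    (hn : 1 ≤ n) :
    coeff (n - 1) (h ^ n * derivativeFun (psComp W (PowerSeries.X * h⁻¹))) =
      (n : ℂ) * coeff n W := by
  set u := PowerSeries.X * h⁻¹ with hu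
  have hu0 : constantCoeff u = 0 := by simp [hu]
  set T := ∑ j ∈ Finset.range (n + 1), PowerSeries.C (coeff j W) * u ^ j with hT
  have hagree : ∀ m ≤ n, coeff m (psComp W u) = coeff m T := by
    intro m hm
    rw [coeff_psComp_ext hu0 W hm, hT, map_sum]
    apply Finset.sum_congr rfl
    intro j _
    rw [PowerSeries.coeff_C_mul]
  rw [agree_mul_derivative hn hagree, hT]
  have hDT : derivativeFun (∑ j ∈ Finset.range (n + 1), PowerSeries.C (coeff j W) * u ^ j)
      = ∑ j ∈ Finset.range (n + 1), PowerSeries.C (coeff j W) * derivativeFun (u ^ j) := by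
    rw [show (derivativeFun : PowerSeries ℂ → PowerSeries ℂ) = (d⁄dX ℂ : _) from rfl]
    rw [map_sum]
    apply Finset.sum_congr rfl
    intro j _
    rw [← smul_eq_C_mul, ← smul_eq_C_mul, Derivation.map_smul]
  rw [hDT, Finset.mul_sum, map_sum]
  have : ∀ j ∈ Finset.range (n + 1),
      coeff (n - 1) (h ^ n * (PowerSeries.C (coeff j W) * derivativeFun (u ^ j)))
      = coeff j W * (if j = n then (n : ℂ) else 0) := by
    intro j hj
    simp only [Finset.mem_range] at hj
    rw [show h ^ n * (PowerSeries.C (coeff j W) * derivativeFun (u ^ j))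
        = PowerSeries.C (coeff j W) * (h ^ n * derivativeFun (u ^ j)) by ring,
      PowerSeries.coeff_C_mul, star_j h hh hn (by omega : j ≤ n)]
  rw [Finset.sum_congr rfl this]
  rw [Finset.sum_eq_single n]
  · rw [if_pos rfl]; ring
  · intro j _ hjn; rw [if_neg hjn, mul_zero]
  · intro hcon; exact absurd (Finset.self_mem_range_succ n) hcon

section Comp

variable {φ g h ψ : PowerSeries ℂ}

lemma chi0 (hψ0 : constantCoeff ψ = 0) : constantCoeff (ψ * (psComp h ψ)⁻¹) = 0 := by
  rw [map_mul, hψ0, zero_mul]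

lemma iter0 (E : PowerSeries ℂ) (hE : constantCoeff E = 0) (i : ℕ) :
    constantCoeff (iterComp E i) = 0 := by
  induction i with
  | zero => simp [iterComp]
  | succ i ih => rw [iterComp, constantCoeff_psComp]; exact ih

lemma chi_phi (hφ0 : constantCoeff φ = 0) (hψ0 : constantCoeff ψ = 0)
    (hψφ : psComp ψ φ = PowerSeries.X) (hh0 : constantCoeff h ≠ 0) :
    psComp (ψ * (psComp h ψ)⁻¹) φ = PowerSeries.X * h⁻¹ := by
  have hhψ : constantCoeff (psComp h ψ) ≠ 0 := by rw [constantCoeff_psComp]; exact hh0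
  rw [psComp_mul hφ0, hψφ, psComp_inv hφ0 hhψ, psComp_assoc hψ0 hφ0, hψφ, psComp_X_right]

lemma iter_phi (hφ0 : constantCoeff φ = 0) (hψ0 : constantCoeff ψ = 0)
    (hψφ : psComp ψ φ = PowerSeries.X) (hh0 : constantCoeff h ≠ 0) (i : ℕ) :
    psComp (iterComp (ψ * (psComp h ψ)⁻¹) (i + 1)) φ =
      psComp (iterComp (ψ * (psComp h ψ)⁻¹) i) (PowerSeries.X * h⁻¹) := by
  rw [iterComp, psComp_assoc (chi0 hψ0) hφ0, chi_phi hφ0 hψ0 hψφ hh0]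

lemma gpsi_phi (hφ0 : constantCoeff φ = 0) (hψ0 : constantCoeff ψ = 0)
    (hψφ : psComp ψ φ = PowerSeries.X) : psComp (psComp g ψ) φ = g := by
  rw [psComp_assoc hψ0 hφ0, hψφ, psComp_X_right]

lemma u0 : constantCoeff (PowerSeries.X * h⁻¹ : PowerSeries ℂ) = 0 := by simp

lemma gi_phi (hφ0 : constantCoeff φ = 0) (hψ0 : constantCoeff ψ = 0)
    (hψφ : psComp ψ φ = PowerSeries.X) (hh0 : constantCoeff h ≠ 0) (i : ℕ) :
    psComp (psComp (psComp g ψ) (iterComp (ψ * (psComp h ψ)⁻¹) (i + 1))) φ =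
      psComp (psComp (psComp g ψ) (iterComp (ψ * (psComp h ψ)⁻¹) i)) (PowerSeries.X * h⁻¹) := by
  rw [psComp_assoc (iter0 _ (chi0 hψ0) (i + 1)) hφ0, iter_phi hφ0 hψ0 hψφ hh0,
    ← psComp_assoc (iter0 _ (chi0 hψ0) i) u0]

lemma Gprod_phi (hφ0 : constantCoeff φ = 0) (hψ0 : constantCoeff ψ = 0)
    (hψφ : psComp ψ φ = PowerSeries.X) (hh0 : constantCoeff h ≠ 0) (s : ℕ) :
    psComp (∏ i ∈ Finset.range (s + 1),
        psComp (psComp g ψ) (iterComp (ψ * (psComp h ψ)⁻¹) i)) φ =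
      psComp (∏ i ∈ Finset.range s,
        psComp (psComp g ψ) (iterComp (ψ * (psComp h ψ)⁻¹) i)) (PowerSeries.X * h⁻¹) * g := by
  rw [psComp_prod hφ0, psComp_prod u0, Finset.prod_range_succ']
  congr 1
  · apply Finset.prod_congr rfl
    intro i _
    exact gi_phi hφ0 hψ0 hψφ hh0 i
  · show psComp (psComp (psComp g ψ) (iterComp (ψ * (psComp h ψ)⁻¹) 0)) φ = g
    rw [show iterComp (ψ * (psComp h ψ)⁻¹) 0 = PowerSeries.X from rfl, psComp_X_right]
    exact gpsi_phi hφ0 hψ0 hψφ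

lemma Gprod0 (hg : constantCoeff g ≠ 0) (s : ℕ) :
    constantCoeff (∏ i ∈ Finset.range s,
      psComp (psComp g ψ) (iterComp (ψ * (psComp h ψ)⁻¹) i)) ≠ 0 := by
  rw [map_prod]
  apply Finset.prod_ne_zero_iff.2
  intro i _
  rw [constantCoeff_psComp, constantCoeff_psComp]
  exact hg

lemma comp_main (hφ0 : constantCoeff φ = 0) (hψ0 : constantCoeff ψ = 0)
    (hψφ : psComp ψ φ = PowerSeries.X) (hg : constantCoeff g ≠ 0)
    (hh0 : constantCoeff h ≠ 0) (s k : ℕ) :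
    psComp ((iterComp (ψ * (psComp h ψ)⁻¹) (s + 1)) ^ k *
        (∏ i ∈ Finset.range (s + 1),
          psComp (psComp g ψ) (iterComp (ψ * (psComp h ψ)⁻¹) i))⁻¹) φ * g =
      psComp ((iterComp (ψ * (psComp h ψ)⁻¹) s) ^ k *
        (∏ i ∈ Finset.range s,
          psComp (psComp g ψ) (iterComp (ψ * (psComp h ψ)⁻¹) i))⁻¹) (PowerSeries.X * h⁻¹) := by
  rw [psComp_mul hφ0, psComp_pow hφ0, psComp_inv hφ0 (Gprod0 hg (s + 1)),
    psComp_mul u0, psComp_pow u0, psComp_inv u0 (Gprod0 hg s),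
    iter_phi hφ0 hψ0 hψφ hh0, Gprod_phi hφ0 hψ0 hψφ hh0, PowerSeries.mul_inv_rev]
  rw [mul_assoc, mul_assoc, mul_comm (g⁻¹) _]
  rw [mul_assoc, PowerSeries.mul_inv_cancel g hg, mul_one]

end Comp

section Key

variable {φ g h ψ : PowerSeries ℂ}

lemma key_sum (hφ0 : constantCoeff φ = 0) (hψ0 : constantCoeff ψ = 0)
    (hψφ : psComp ψ φ = PowerSeries.X) (hg : constantCoeff g ≠ 0)
    (hh0 : constantCoeff h ≠ 0) (s k n : ℕ) (hk : 1 ≤ k) (hkn : k ≤ n) :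
    ∑ l ∈ Finset.Icc k n,
      coeff l ((iterComp (ψ * (psComp h ψ)⁻¹) (s + 1)) ^ k *
        (∏ i ∈ Finset.range (s + 1),
          psComp (psComp g ψ) (iterComp (ψ * (psComp h ψ)⁻¹) i))⁻¹) *
      coeff (n - 1) (h ^ n * derivativeFun (φ ^ l * g)) =
    (n : ℂ) * coeff n ((iterComp (ψ * (psComp h ψ)⁻¹) s) ^ k *
        (∏ i ∈ Finset.range s,
          psComp (psComp g ψ) (iterComp (ψ * (psComp h ψ)⁻¹) i))⁻¹) := by
  set F := (iterComp (ψ * (psComp h ψ)⁻¹) (s + 1)) ^ k *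
        (∏ i ∈ Finset.range (s + 1),
          psComp (psComp g ψ) (iterComp (ψ * (psComp h ψ)⁻¹) i))⁻¹ with hF
  -- extend to range (n+1)
  have hsub : Finset.Icc k n ⊆ Finset.range (n + 1) := by
    intro l hl
    simp only [Finset.mem_Icc] at hl
    exact Finset.mem_range.2 (by omega)
  have hext : ∑ l ∈ Finset.Icc k n, coeff l F * coeff (n - 1) (h ^ n * derivativeFun (φ ^ l * g))
      = ∑ l ∈ Finset.range (n + 1), coeff l F * coeff (n - 1) (h ^ n * derivativeFun (φ ^ l * g)) := by
    apply Finset.sum_subset hsub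
    intro l hl hl'
    simp only [Finset.mem_range] at hl
    simp only [Finset.mem_Icc, not_and_or, not_le] at hl'
    have hlk : l < k := by omega
    rw [hF, coeff_pow_mul_eq_zero (iter0 _ (chi0 hψ0) (s + 1)) hlk, zero_mul]
  rw [hext]
  -- linearity: sum = coeff (n-1) (h^n * D(T * g))
  set T := ∑ l ∈ Finset.range (n + 1), PowerSeries.C (coeff l F) * φ ^ l with hT
  have hlin : ∑ l ∈ Finset.range (n + 1), coeff l F * coeff (n - 1) (h ^ n * derivativeFun (φ ^ l * g))
      = coeff (n - 1) (h ^ n * derivativeFun (T * g)) := by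
    have hTg : T * g = ∑ l ∈ Finset.range (n + 1), PowerSeries.C (coeff l F) * (φ ^ l * g) := by
      rw [hT, Finset.sum_mul]
      apply Finset.sum_congr rfl
      intro l _
      ring
    have hD : derivativeFun (T * g) = ∑ l ∈ Finset.range (n + 1),
        PowerSeries.C (coeff l F) * derivativeFun (φ ^ l * g) := by
      rw [hTg, show (derivativeFun : PowerSeries ℂ → PowerSeries ℂ) = (d⁄dX ℂ : _) from rfl, map_sum]
      apply Finset.sum_congr rfl
      intro l _
      rw [← smul_eq_C_mul, ← smul_eq_C_mul, Derivation.map_smul]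
    rw [hD, Finset.mul_sum, map_sum]
    apply Finset.sum_congr rfl
    intro l _
    rw [show h ^ n * (PowerSeries.C (coeff l F) * derivativeFun (φ ^ l * g))
        = PowerSeries.C (coeff l F) * (h ^ n * derivativeFun (φ ^ l * g)) by ring,
      PowerSeries.coeff_C_mul]
  rw [hlin]
  -- replace T by psComp F φ
  have hTagree : ∀ m ≤ n, coeff m (T * g) = coeff m (psComp F φ * g) := by
    apply agree_mul _ (fun m _ => rfl)
    intro m hm
    rw [coeff_psComp_ext hφ0 F hm, hT, map_sum]
    apply Finset.sum_congr rfl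
    intro l _
    rw [PowerSeries.coeff_C_mul]
  rw [agree_mul_derivative (by omega : 1 ≤ n) hTagree]
  -- composition identity
  rw [comp_main hφ0 hψ0 hψφ hg hh0 s k]
  exact star h hh0 _ (by omega)

end Key

lemma sum_Icc_swap (k n : ℕ) (f : ℕ → ℕ → ℂ) :
    ∑ j ∈ Finset.Icc k n, ∑ l ∈ Finset.Icc k j, f l j
      = ∑ l ∈ Finset.Icc k n, ∑ j ∈ Finset.Icc l n, f l j := by
  have h1 : ∀ j ∈ Finset.Icc k n, ∑ l ∈ Finset.Icc k j, f l j
      = ∑ l ∈ Finset.Icc k n, if l ≤ j then f l j else 0 := by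
    intro j hj
    simp only [Finset.mem_Icc] at hj
    rw [← Finset.sum_filter]
    apply Finset.sum_congr _ (fun _ _ => rfl)
    ext l
    simp only [Finset.mem_filter, Finset.mem_Icc]
    omega
  rw [Finset.sum_congr rfl h1, Finset.sum_comm]
  apply Finset.sum_congr rfl
  intro l hl
  simp only [Finset.mem_Icc] at hl
  rw [← Finset.sum_filter]
  apply Finset.sum_congr _ (fun _ _ => rfl)
  ext j
  simp only [Finset.mem_filter, Finset.mem_Icc]
  omega


lemma key_matrix {φ g h ψ : PowerSeries ℂ} (a : ℕ → ℂ) (ha : ∀ n, 1 ≤ n → a n ≠ 0)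
    (hφ0 : constantCoeff φ = 0) (hψ0 : constantCoeff ψ = 0)
    (hψφ : psComp ψ φ = PowerSeries.X) (hg : constantCoeff g ≠ 0)
    (hh0 : constantCoeff h ≠ 0)
    (A : ℕ → ℕ → ℂ)
    (hA : ∀ k n, 1 ≤ k → k ≤ n →
      A k n = a k / a n * (1 / k.factorial) *
        (((n - 1).factorial : ℂ) * coeff (n - 1) (h ^ n * derivativeFun (φ ^ k * g))))
    (s k n : ℕ) (hk : 1 ≤ k) (hkn : k ≤ n) :
    ∑ l ∈ Finset.Icc k n,
      (a k / a l * (1 / k.factorial) *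
        ((l.factorial : ℂ) * coeff l ((iterComp (ψ * (psComp h ψ)⁻¹) (s + 1)) ^ k *
          (∏ i ∈ Finset.range (s + 1),
            psComp (psComp g ψ) (iterComp (ψ * (psComp h ψ)⁻¹) i))⁻¹))) * A l n
    = a k / a n * (1 / k.factorial) *
        ((n.factorial : ℂ) * coeff n ((iterComp (ψ * (psComp h ψ)⁻¹) s) ^ k *
          (∏ i ∈ Finset.range s,
            psComp (psComp g ψ) (iterComp (ψ * (psComp h ψ)⁻¹) i))⁻¹)) := by
  have hkf : ((k.factorial : ℂ)) ≠ 0 := Nat.cast_ne_zero.2 (Nat.factorial_ne_zero k)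
  have han : a n ≠ 0 := ha n (by omega)
  have hterm : ∀ l ∈ Finset.Icc k n,
      (a k / a l * (1 / k.factorial) *
        ((l.factorial : ℂ) * coeff l ((iterComp (ψ * (psComp h ψ)⁻¹) (s + 1)) ^ k *
          (∏ i ∈ Finset.range (s + 1),
            psComp (psComp g ψ) (iterComp (ψ * (psComp h ψ)⁻¹) i))⁻¹))) * A l n
      = (a k / a n * (1 / k.factorial) * (((n - 1).factorial : ℂ))) *
          (coeff l ((iterComp (ψ * (psComp h ψ)⁻¹) (s + 1)) ^ k *
            (∏ i ∈ Finset.range (s + 1),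
              psComp (psComp g ψ) (iterComp (ψ * (psComp h ψ)⁻¹) i))⁻¹) *
           coeff (n - 1) (h ^ n * derivativeFun (φ ^ l * g))) := by
    intro l hl
    simp only [Finset.mem_Icc] at hl
    rw [hA l n (by omega) (by omega)]
    have hal : a l ≠ 0 := ha l (by omega)
    have hlf : ((l.factorial : ℂ)) ≠ 0 := Nat.cast_ne_zero.2 (Nat.factorial_ne_zero l)
    field_simp
  rw [Finset.sum_congr rfl hterm, ← Finset.mul_sum,
    key_sum hφ0 hψ0 hψφ hg hh0 s k n hk hkn]
  have hfac : ((n - 1).factorial : ℂ) * n = (n.factorial : ℂ) := by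
    have h1 : n.factorial = n * (n - 1).factorial := by
      conv_lhs => rw [show n = (n - 1) + 1 by omega]
      rw [Nat.factorial_succ, show (n - 1) + 1 = n by omega]
    rw [h1]; push_cast; ring
  rw [← hfac]; ring

/-- Theorem: with `ψ = φ^⟨-1⟩`, `χ = ψ/(h∘ψ)`, and `B` an upper triangular two-sided
inverse of `A`, the `s`-th power of `B` (i.e. `A^{-s}`) has entries
`[B^s]_{k,n} = (a_k/a_n)·(1/k!)·(d/dt)^n_{t=0}[(χ^⟨s⟩(t))^k · (∏_{i=0}^{s-1} g(ψ(χ^⟨i⟩(t))))^{-1}]`. -/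
theorem stmt3 (a : ℕ → ℂ) (ha : ∀ n, 1 ≤ n → a n ≠ 0)
    (φ g h : PowerSeries ℂ)
    (hφ0 : constantCoeff φ = 0)
    (hne : constantCoeff (derivativeFun φ) * constantCoeff g * constantCoeff h ≠ 0)
    (ψ : PowerSeries ℂ) (hψ0 : constantCoeff ψ = 0)
    (hψφ : psComp ψ φ = PowerSeries.X) (hφψ : psComp φ ψ = PowerSeries.X)
    (A B : ℕ → ℕ → ℂ)
    (hAtri : ∀ k n, n < k → A k n = 0)
    (hBtri : ∀ k n, n < k → B k n = 0)
    (hA : ∀ k n, 1 ≤ k → k ≤ n →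
      A k n = a k / a n * (1 / k.factorial) *
        (((n - 1).factorial : ℂ) * coeff (n - 1) (h ^ n * derivativeFun (φ ^ k * g))))
    (hAB : ∀ k n, 1 ≤ k → 1 ≤ n → triMul A B k n = triId k n)
    (hBA : ∀ k n, 1 ≤ k → 1 ≤ n → triMul B A k n = triId k n)
    (s : ℕ) (k n : ℕ) (hk : 1 ≤ k) (hkn : k ≤ n) :
    triPow B s k n = a k / a n * (1 / k.factorial) *
      ((n.factorial : ℂ) * coeff n ((iterComp (ψ * (psComp h ψ)⁻¹) s) ^ k *
        (∏ i ∈ Finset.range s,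
          psComp (psComp g ψ) (iterComp (ψ * (psComp h ψ)⁻¹) i))⁻¹)) := by
  have hg : constantCoeff g ≠ 0 := by
    intro hc; apply hne; rw [hc]; ring
  have hh0 : constantCoeff h ≠ 0 := by
    intro hc; apply hne; rw [hc]; ring
  have main : ∀ s, ∀ k n, 1 ≤ k → k ≤ n →
      triPow B s k n = a k / a n * (1 / k.factorial) *
        ((n.factorial : ℂ) * coeff n ((iterComp (ψ * (psComp h ψ)⁻¹) s) ^ k *
          (∏ i ∈ Finset.range s,
            psComp (psComp g ψ) (iterComp (ψ * (psComp h ψ)⁻¹) i))⁻¹)) := by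
    intro s
    induction s with
    | zero =>
      intro k n hk hkn
      show triId k n = _
      simp only [Finset.range_zero, Finset.prod_empty, inv_one, mul_one]
      rw [show iterComp (ψ * (psComp h ψ)⁻¹) 0 = PowerSeries.X from rfl,
        PowerSeries.coeff_X_pow]
      rcases eq_or_ne k n with rfl | hne'
      · rw [triId]
        simp only [if_pos rfl]
        have hak : a k ≠ 0 := ha k hk
        have hkf : ((k.factorial : ℂ)) ≠ 0 := Nat.cast_ne_zero.2 (Nat.factorial_ne_zero k)
        field_simp
      · rw [triId, if_neg hne', if_neg (Ne.symm hne')]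
        simp
    | succ s ih =>
      intro k n hk hkn
      show triMul (triPow B s) B k n = _
      rw [triMul]
      have h1 : ∀ j ∈ Finset.Icc k n, triPow B s k j * B j n =
          (∑ l ∈ Finset.Icc k j,
            (a k / a l * (1 / k.factorial) *
              ((l.factorial : ℂ) * coeff l ((iterComp (ψ * (psComp h ψ)⁻¹) (s + 1)) ^ k *
                (∏ i ∈ Finset.range (s + 1),
                  psComp (psComp g ψ) (iterComp (ψ * (psComp h ψ)⁻¹) i))⁻¹))) * A l j) * B j n := by
        intro j hj
        simp only [Finset.mem_Icc] at hj
        rw [ih k j hk hj.1, ← key_matrix a ha hφ0 hψ0 hψφ hg hh0 A hA s k j hk hj.1]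
      rw [Finset.sum_congr rfl h1]
      simp only [Finset.sum_mul]
      rw [sum_Icc_swap k n (fun l j =>
        (a k / a l * (1 / k.factorial) *
          ((l.factorial : ℂ) * coeff l ((iterComp (ψ * (psComp h ψ)⁻¹) (s + 1)) ^ k *
            (∏ i ∈ Finset.range (s + 1),
              psComp (psComp g ψ) (iterComp (ψ * (psComp h ψ)⁻¹) i))⁻¹))) * A l j * B j n)]
      have h2 : ∀ l ∈ Finset.Icc k n,
          ∑ j ∈ Finset.Icc l n,
            (a k / a l * (1 / k.factorial) *
              ((l.factorial : ℂ) * coeff l ((iterComp (ψ * (psComp h ψ)⁻¹) (s + 1)) ^ k *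
                (∏ i ∈ Finset.range (s + 1),
                  psComp (psComp g ψ) (iterComp (ψ * (psComp h ψ)⁻¹) i))⁻¹))) * A l j * B j n
          = (a k / a l * (1 / k.factorial) *
              ((l.factorial : ℂ) * coeff l ((iterComp (ψ * (psComp h ψ)⁻¹) (s + 1)) ^ k *
                (∏ i ∈ Finset.range (s + 1),
                  psComp (psComp g ψ) (iterComp (ψ * (psComp h ψ)⁻¹) i))⁻¹))) * triId l n := by
        intro l hl
        simp only [Finset.mem_Icc] at hl
        rw [← hAB l n (by omega) (by omega), triMul, Finset.mul_sum]
        apply Finset.sum_congr rfl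
        intro j _
        ring
      rw [Finset.sum_congr rfl h2]
      rw [Finset.sum_eq_single n]
      · rw [triId, if_pos rfl, mul_one]
      · intro l _ hln
        rw [triId, if_neg hln, mul_zero]
      · intro hcon
        exact absurd (Finset.mem_Icc.2 ⟨hkn, le_refl n⟩) hcon
  exact main s k n hk hkn
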